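/- Let R be a commutative ring, M an R-module with a free resolution 0 → F₁ →^δ F₀ → M → 0 by finite free modules. If Coker(δ*) = 0, then M is reflexive, i.e., the canonical map M → M** is an isomorphism. -/
import Mathlib

/-- Let `R` be a commutative Noetherian local ring and `M` a module with a
finite free resolution `0 → F₁ →δ F₀ → M → 0`. If `Coker(δ*) = 0` (i.e. `δ*` is
surjective), then `M` is reflexive: the evaluation map `M → M**` is an isomorphism. -/
theorem reflexive_of_coker_dualMap_eq_zero
    (R : Type) [CommRing R] [IsNoetherianRing R] [IsLocalRing R]
    (M : Type) [AddCommGroup M] [Module R M] [Module.Finite R M]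
    (n₁ n₀ : ℕ) (δ : (Fin n₁ → R) →ₗ[R] (Fin n₀ → R)) (π : (Fin n₀ → R) →ₗ[R] M)
    (hinj : Function.Injective δ) (hex : Function.Exact δ π)
    (hsurj : Function.Surjective π)
    (hcoker : Function.Surjective δ.dualMap) :
    Function.Bijective (Module.Dual.eval R M) := by
  -- From surjectivity of δ*, build a retraction r of δ.
  choose φ hφ using fun i : Fin n₁ => hcoker (LinearMap.proj i)
  let r : (Fin n₀ → R) →ₗ[R] (Fin n₁ → R) := LinearMap.pi φ
  have hr : r ∘ₗ δ = LinearMap.id :=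
    LinearMap.ext fun x => funext fun i => by
      simpa [r] using LinearMap.congr_fun (hφ i) x
  -- The sequence splits: N ≃ F₁ × M, so π has a section.
  obtain ⟨e, -, he⟩ := hex.splitInjectiveEquiv hsurj ⟨r, hr⟩
  let s : M →ₗ[R] (Fin n₀ → R) := e.symm.toLinearMap ∘ₗ LinearMap.inr R (Fin n₁ → R) M
  have hs : π ∘ₗ s = LinearMap.id := by
    ext m
    simp [s, LinearMap.congr_fun he (e.symm (0, m))]
  -- Hence M is projective, so flat, so free (local Noetherian), so reflexive.
  haveI : Module.Projective R M := Module.Projective.of_split s π hs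
  haveI : Module.FinitePresentation R M := Module.finitePresentation_of_finite R M
  haveI : Module.Free R M := Module.free_of_flat_of_isLocalRing
  exact Module.bijective_dual_eval R M
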